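/- arXiv:2508.15017 — 4 statements merged into one kernel-verified Lean document; each statement's English description precedes it below -/
import Mathlib

section
/- Let Δx > 0, E = [-Δx/2, Δx/2], and K ≥ 2. The linear functionals σ₋(v) = v(-Δx/2), σ₊(v) = v(Δx/2), and σ_k(v) = ((k+1)2^k/Δx^{k+1}) ∫_E x^k v(x) dx for k = 0, …, K-2, form a basis of the dual space of the space of real polynomials of degree at most K restricted to E; equivalently, a polynomial of degree at most K vanishing at both endpoints of E and with all moments ∫_E x^k v(x) dx = 0 for k = 0, …, K-2 is identically zero. -/
open Polynomial

/-- Unisolvence of the 1-d Active Flux element of degree `K`: a polynomial of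
degree at most `K` vanishing at both endpoints of `E = [-Δx/2, Δx/2]` and with
vanishing moments `∫_E x^k v(x) dx = 0` for `k = 0, …, K-2` is identically zero. -/
theorem stmt_1 (Δx : ℝ) (hΔx : 0 < Δx) (K : ℕ) (hK : 2 ≤ K)
    (v : Polynomial ℝ) (hdeg : v.natDegree ≤ K)
    (hleft : v.eval (-(Δx/2)) = 0) (hright : v.eval (Δx/2) = 0)
    (hmom : ∀ k : ℕ, k ≤ K - 2 →
      (∫ x in (-(Δx/2))..(Δx/2), x^k * v.eval x) = 0) :
    v = 0 := by
  by_contra hv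
  set a : ℝ := Δx / 2 with ha
  have ha0 : 0 < a := by positivity
  have h1 : (X - C a) ∣ v := dvd_iff_isRoot.mpr hright
  have h2 : (X - C (-a)) ∣ v := dvd_iff_isRoot.mpr (by simpa using hleft)
  have hcop : IsCoprime (X - C a) (X - C (-a)) := by
    apply isCoprime_X_sub_C_of_isUnit_sub
    have h2a : a - (-a) = 2 * a := by ring
    rw [h2a]
    exact isUnit_iff_ne_zero.mpr (by positivity)
  obtain ⟨q, hq⟩ := hcop.mul_dvd h1 h2
  have hq0 : q ≠ 0 := fun h => hv (by simp [hq, h])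
  have hqdeg : q.natDegree ≤ K - 2 := by
    have hne : (X - C a) * (X - C (-a)) ≠ 0 :=
      mul_ne_zero (X_sub_C_ne_zero a) (X_sub_C_ne_zero (-a))
    have hdv : v.natDegree = 2 + q.natDegree := by
      rw [hq, natDegree_mul hne hq0,
        natDegree_mul (X_sub_C_ne_zero a) (X_sub_C_ne_zero (-a)),
        natDegree_X_sub_C, natDegree_X_sub_C]
    omega
  have hkey : (∫ x in (-a)..a, q.eval x * v.eval x) = 0 := by
    have hlt : q.natDegree < K - 1 := by omega
    have hsum : ∀ x : ℝ, q.eval x * v.eval x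
        = ∑ i ∈ Finset.range (K - 1), q.coeff i * (x ^ i * v.eval x) := by
      intro x
      rw [eval_eq_sum_range' hlt, Finset.sum_mul]
      exact Finset.sum_congr rfl fun i _ => by ring
    simp_rw [hsum]
    rw [intervalIntegral.integral_finset_sum (f := fun i x => q.coeff i * (x ^ i * v.eval x))
      (fun i _ => (continuous_const.mul ((continuous_pow i).mul v.continuous)).intervalIntegrable _ _)]
    refine Finset.sum_eq_zero fun i hi => ?_
    rw [intervalIntegral.integral_const_mul,
      hmom i (by simp only [Finset.mem_range] at hi; omega), mul_zero]
  have heval : ∀ x : ℝ, q.eval x * v.eval x = -((a - x) * (x + a) * (q.eval x) ^ 2) := by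
    intro x; rw [hq]; simp; ring
  have hzero : (∫ x in (-a)..a, (a - x) * (x + a) * (q.eval x) ^ 2) = 0 := by
    have : (∫ x in (-a)..a, q.eval x * v.eval x)
        = -(∫ x in (-a)..a, (a - x) * (x + a) * (q.eval x) ^ 2) := by
      rw [← intervalIntegral.integral_neg]
      exact intervalIntegral.integral_congr fun x _ => heval x
    rw [hkey] at this
    linarith
  obtain ⟨c, hc, hcr⟩ : ∃ c ∈ Set.Ioo (-a) a, ¬ q.IsRoot c := by
    have hfin := Polynomial.finite_setOf_isRoot hq0
    have hinf : (Set.Ioo (-a) a).Infinite := Set.Ioo_infinite (by linarith)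
    obtain ⟨c, hc⟩ := (hinf.diff hfin).nonempty
    exact ⟨c, hc.1, hc.2⟩
  have hpos : (0 : ℝ) < ∫ x in (-a)..a, (a - x) * (x + a) * (q.eval x) ^ 2 := by
    have h0 : (∫ x in (-a)..a, (0 : ℝ)) = 0 := by simp
    rw [← h0]
    apply intervalIntegral.integral_lt_integral_of_continuousOn_of_le_of_exists_lt
      (by linarith) continuousOn_const
    · exact (((continuous_const.sub continuous_id).mul (continuous_id.add continuous_const)).mul (q.continuous.pow 2)).continuousOn
    · intro x hx
      have h1 : 0 ≤ a - x := by linarith [hx.2]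
      have h2 : 0 ≤ x + a := by linarith [hx.1]
      positivity
    · refine ⟨c, ⟨hc.1.le, hc.2.le⟩, ?_⟩
      have h1 : 0 < a - c := by linarith [hc.2]
      have h2 : 0 < c + a := by linarith [hc.1]
      have h3 : q.eval c ≠ 0 := hcr
      positivity
  linarith
end

section
/- Let Δx > 0 and let p, r be polynomials of degree at most 2 with p(-Δx/2) = a, (1/Δx)∫_{-Δx/2}^{Δx/2} p = b, p(Δx/2) = c, and r(-Δx/2) = c, (1/Δx)∫_{-Δx/2}^{Δx/2} r = d, r(Δx/2) = e. Then (1/2)(p'(Δx/2) + r'(-Δx/2)) = (a - 3b + 3d - e)/Δx. -/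
open Polynomial

lemma eval_deg2 (q : Polynomial ℝ) (hq : q.natDegree ≤ 2) (x : ℝ) :
    q.eval x = q.coeff 0 + q.coeff 1 * x + q.coeff 2 * x^2 := by
  rw [Polynomial.eval_eq_sum_range' (lt_of_le_of_lt hq (by norm_num : (2:ℕ) < 3))]
  simp [Finset.sum_range_succ]

lemma deriv_deg2 (q : Polynomial ℝ) (hq : q.natDegree ≤ 2) (x : ℝ) :
    (Polynomial.derivative q).eval x = q.coeff 1 + 2 * q.coeff 2 * x := by
  have hd : (Polynomial.derivative q).natDegree ≤ 2 :=
    le_trans (Polynomial.natDegree_derivative_le q) (by omega)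
  rw [eval_deg2 _ hd]
  have h3 : q.coeff 3 = 0 := Polynomial.coeff_eq_zero_of_natDegree_lt (by omega)
  simp only [Polynomial.coeff_derivative, h3]
  push_cast
  ring

lemma int_deg2 (q : Polynomial ℝ) (hq : q.natDegree ≤ 2) (u v : ℝ) :
    (∫ x in u..v, q.eval x) =
      q.coeff 0 * (v - u) + q.coeff 1 * (v^2 - u^2)/2 + q.coeff 2 * (v^3 - u^3)/3 := by
  have h : ∀ x : ℝ, HasDerivAt
      (fun x : ℝ => q.coeff 0 * x + q.coeff 1 * x^2/2 + q.coeff 2 * x^3/3)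
      (q.eval x) x := by
    intro x
    rw [eval_deg2 q hq]
    have h1 : HasDerivAt (fun x : ℝ => q.coeff 0 * x) (q.coeff 0) x := by
      simpa using (hasDerivAt_id x).const_mul (q.coeff 0)
    have h2 : HasDerivAt (fun x : ℝ => q.coeff 1 * x^2/2) (q.coeff 1 * x) x := by
      have := (hasDerivAt_pow 2 x).const_mul (q.coeff 1)
      have := this.div_const 2
      refine this.congr_deriv ?_
      push_cast
      ring
    have h3 : HasDerivAt (fun x : ℝ => q.coeff 2 * x^3/3) (q.coeff 2 * x^2) x := by
      have := (hasDerivAt_pow 3 x).const_mul (q.coeff 2)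
      have := this.div_const 3
      refine this.congr_deriv ?_
      push_cast
      ring
    exact (h1.add h2).add h3
  rw [intervalIntegral.integral_eq_sub_of_hasDerivAt (fun x _ => h x)
    ((Polynomial.continuous q).intervalIntegrable u v)]
  ring

theorem stmt_7 (Δx : ℝ) (hΔx : 0 < Δx) (a b c d e : ℝ)
    (p r : Polynomial ℝ) (hpdeg : p.natDegree ≤ 2) (hrdeg : r.natDegree ≤ 2)
    (hp1 : p.eval (-(Δx/2)) = a)
    (hp2 : (1/Δx) * (∫ x in (-(Δx/2))..(Δx/2), p.eval x) = b)
    (hp3 : p.eval (Δx/2) = c)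
    (hr1 : r.eval (-(Δx/2)) = c)
    (hr2 : (1/Δx) * (∫ x in (-(Δx/2))..(Δx/2), r.eval x) = d)
    (hr3 : r.eval (Δx/2) = e) :
    (1/2) * ((Polynomial.derivative p).eval (Δx/2) +
      (Polynomial.derivative r).eval (-(Δx/2))) =
    (a - 3*b + 3*d - e)/Δx := by
  rw [int_deg2 p hpdeg] at hp2
  rw [int_deg2 r hrdeg] at hr2
  rw [eval_deg2 p hpdeg] at hp1 hp3
  rw [eval_deg2 r hrdeg] at hr1 hr3
  rw [deriv_deg2 p hpdeg, deriv_deg2 r hrdeg]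
  subst hp1 hp2 hp3 hr2 hr3
  have hne : Δx ≠ 0 := ne_of_gt hΔx
  field_simp
  linear_combination (-16) * hr1
end

section
/- The nine polynomials B₀ = (9/4)(4ξ²-1)(4η²-1), B_{±½,±½} (four corner functions as defined in the biparabolic Active Flux element), B_{±½,0} and B_{0,±½} (four edge-midpoint functions) form a basis of the tensor-product space Q² of polynomials of degree at most 2 in each of ξ and η on [-1/2,1/2]²; equivalently, any q ∈ Q² vanishing at the four corners and four edge midpoints and having zero average over the square is identically zero. -/
lemma poly_int (A B C : ℝ) :
    (∫ x in (-(1/2 : ℝ))..(1/2), (A + B * x + C * x ^ 2)) = A + C / 12 := by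
  have h1 : IntervalIntegrable (fun x : ℝ => A) MeasureTheory.volume (-(1/2)) (1/2) :=
    intervalIntegrable_const
  have h2 : IntervalIntegrable (fun x : ℝ => B * x) MeasureTheory.volume (-(1/2)) (1/2) :=
    (continuous_const.mul continuous_id).intervalIntegrable _ _
  have h3 : IntervalIntegrable (fun x : ℝ => C * x ^ 2) MeasureTheory.volume (-(1/2)) (1/2) :=
    (continuous_const.mul (continuous_pow 2)).intervalIntegrable _ _
  rw [intervalIntegral.integral_add (h1.add h2) h3, intervalIntegral.integral_add h1 h2,
    intervalIntegral.integral_const, intervalIntegral.integral_const_mul,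
    intervalIntegral.integral_const_mul, integral_id, integral_pow]
  norm_num
  ring

set_option maxHeartbeats 1600000 in
/-- Unisolvence of the biparabolic (Q²) Active Flux element: a polynomial of
degree at most 2 in each variable vanishing at the four corners and four edge
midpoints of `[-1/2,1/2]²` and with zero average over the square is zero. -/
theorem stmt_12 (q : ℝ → ℝ → ℝ) (c : Fin 3 → Fin 3 → ℝ)
    (hq : ∀ ξ η, q ξ η = ∑ m : Fin 3, ∑ n : Fin 3, c m n * ξ^(m : ℕ) * η^(n : ℕ))
    (hcorners : ∀ r ∈ ({-(1/2), 1/2} : Set ℝ), ∀ s ∈ ({-(1/2), 1/2} : Set ℝ), q r s = 0)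
    (hedges : q (1/2) 0 = 0 ∧ q (-(1/2)) 0 = 0 ∧ q 0 (1/2) = 0 ∧ q 0 (-(1/2)) = 0)
    (havg : (∫ ξ in (-(1/2 : ℝ))..(1/2), ∫ η in (-(1/2 : ℝ))..(1/2), q ξ η) = 0) :
    ∀ ξ η, q ξ η = 0 := by
  have key : ∀ ξ η : ℝ, q ξ η =
      (c 0 0 + c 1 0 * ξ + c 2 0 * ξ ^ 2) + (c 0 1 + c 1 1 * ξ + c 2 1 * ξ ^ 2) * η
        + (c 0 2 + c 1 2 * ξ + c 2 2 * ξ ^ 2) * η ^ 2 := by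
    intro ξ η
    rw [hq]
    simp [Fin.sum_univ_three]
    ring
  -- corner equations
  have e1 := hcorners (-(1/2)) (by simp) (-(1/2)) (by simp)
  have e2 := hcorners (-(1/2)) (by simp) (1/2) (by simp)
  have e3 := hcorners (1/2) (by simp) (-(1/2)) (by simp)
  have e4 := hcorners (1/2) (by simp) (1/2) (by simp)
  obtain ⟨e5, e6, e7, e8⟩ := hedges
  rw [key] at e1 e2 e3 e4 e5 e6 e7 e8
  norm_num at e1 e2 e3 e4 e5 e6 e7 e8
  -- integral
  have hinner : ∀ ξ : ℝ, (∫ η in (-(1/2 : ℝ))..(1/2), q ξ η)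
      = (c 0 0 + c 1 0 * ξ + c 2 0 * ξ ^ 2) + (c 0 2 + c 1 2 * ξ + c 2 2 * ξ ^ 2) / 12 := by
    intro ξ
    rw [show (∫ η in (-(1/2 : ℝ))..(1/2), q ξ η)
        = ∫ η in (-(1/2 : ℝ))..(1/2), ((c 0 0 + c 1 0 * ξ + c 2 0 * ξ ^ 2)
          + (c 0 1 + c 1 1 * ξ + c 2 1 * ξ ^ 2) * η
          + (c 0 2 + c 1 2 * ξ + c 2 2 * ξ ^ 2) * η ^ 2) from by
      apply intervalIntegral.integral_congr
      intro η _
      exact key ξ η]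
    exact poly_int _ _ _
  have e9 : c 0 0 + c 0 2 / 12 + (c 2 0 + c 2 2 / 12) / 12 = 0 := by
    rw [show (∫ ξ in (-(1/2 : ℝ))..(1/2), ∫ η in (-(1/2 : ℝ))..(1/2), q ξ η)
        = ∫ ξ in (-(1/2 : ℝ))..(1/2), ((c 0 0 + c 0 2 / 12) + (c 1 0 + c 1 2 / 12) * ξ
          + (c 2 0 + c 2 2 / 12) * ξ ^ 2) from by
      apply intervalIntegral.integral_congr
      intro ξ _
      dsimp only
      rw [hinner ξ]
      ring] at havg
    rw [poly_int] at havg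
    linarith
  intro ξ η
  rw [key]
  have h00 : c 0 0 = 0 := by linarith
  have h10 : c 1 0 = 0 := by linarith
  have h20 : c 2 0 = 0 := by linarith
  have h01 : c 0 1 = 0 := by linarith
  have h11 : c 1 1 = 0 := by linarith
  have h21 : c 2 1 = 0 := by linarith
  have h02 : c 0 2 = 0 := by linarith
  have h12 : c 1 2 = 0 := by linarith
  have h22 : c 2 2 = 0 := by linarith
  rw [h00, h10, h20, h01, h11, h21, h02, h12, h22]
  ring
end

section
/- Let A₊(ξ) = (3/4)(-1+4ξ+20ξ²), A₋(ξ) = (3/4)(-1-4ξ+20ξ²), A₀(ξ) = 1 be the symmetric (α = 0) one-dimensional biorthogonal test functions on [-1/2,1/2], and define tensor test functions Ã_{r,s}(ξ,η) = A_r(ξ)A_s(η). Let α₁, α₂, α₃ ∈ ℝ. Then the function A_{+½,0} = ((8α₁ - 1 - α₃)/2) Ã_{+½,+½} + (3(1+α₃)/2) Ã_{+½,0} + ((8α₂ - 1 - α₃)/2) Ã_{+½,-½} satisfies: ∬ A_{+½,0} B dξdη = 0 for B ∈ {B₀, B_{-½,0}, B_{0,+½}, B_{0,-½}, B_{-½,+½},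 B_{-½,-½}}, ∬ A_{+½,0} B_{+½,+½} = α₁, ∬ A_{+½,0} B_{+½,-½} = α₂, and ∬ A_{+½,0} B_{+½,0} = (1+α₃)/2, where all integrals are over [-1/2,1/2]² and the B's are the biparabolic 2-d Active Flux basis functions. -/
lemma int4 (c0 c1 c2 c3 c4 : ℝ) :
    (∫ x in (-(1/2 : ℝ))..(1/2), (c0 + c1*x + c2*x^2 + c3*x^3 + c4*x^4))
      = c0 + c2/12 + c4/80 := by
  have h : ∀ x ∈ Set.uIcc (-(1/2 : ℝ)) (1/2),
      HasDerivAt (fun x : ℝ => c0*x + c1*x^2/2 + c2*x^3/3 + c3*x^4/4 + c4*x^5/5)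
        (c0 + c1*x + c2*x^2 + c3*x^3 + c4*x^4) x := by
    intro x _
    have h := (((hasDerivAt_pow 1 x).const_mul c0).add
      (((hasDerivAt_pow 2 x).const_mul (c1/2)).add
      (((hasDerivAt_pow 3 x).const_mul (c2/3)).add
      (((hasDerivAt_pow 4 x).const_mul (c3/4)).add
      ((hasDerivAt_pow 5 x).const_mul (c4/5))))))
    convert h using 1
    · rfl
    · rfl
    · funext y; simp only [Pi.add_apply]; ring
    · push_cast; ring
  rw [intervalIntegral.integral_eq_sub_of_hasDerivAt h
    (Continuous.intervalIntegrable (by continuity) _ _)]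
  norm_num
  ring

set_option maxHeartbeats 2000000 in
theorem stmt_16 (α₁ α₂ α₃ : ℝ)
    (Ap Am A0 : ℝ → ℝ)
    (hAp : ∀ ξ, Ap ξ = 3/4 * (-1 + 4*ξ + 20*ξ^2))
    (hAm : ∀ ξ, Am ξ = 3/4 * (-1 - 4*ξ + 20*ξ^2))
    (hA0 : ∀ ξ, A0 ξ = 1)
    (Ap0 : ℝ → ℝ → ℝ)
    (hAp0 : ∀ ξ η, Ap0 ξ η =
      (8*α₁ - 1 - α₃)/2 * (Ap ξ * Ap η) +
      3*(1 + α₃)/2 * (Ap ξ * A0 η) +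
      (8*α₂ - 1 - α₃)/2 * (Ap ξ * Am η))
    (Bpp Bmp Bmm Bpm Bp0 Bm0 B0p B0m B00 : ℝ → ℝ → ℝ)
    (hBpp : ∀ ξ η, Bpp ξ η = 1/16 * (2*ξ+1) * (2*η+1) * (-1 + 2*η + 2*ξ + 12*ξ*η))
    (hBmp : ∀ ξ η, Bmp ξ η = 1/16 * (2*ξ-1) * (2*η+1) * (1 - 2*η + 2*ξ + 12*ξ*η))
    (hBmm : ∀ ξ η, Bmm ξ η = 1/16 * (2*ξ-1) * (2*η-1) * (-1 - 2*η - 2*ξ + 12*ξ*η))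
    (hBpm : ∀ ξ η, Bpm ξ η = 1/16 * (2*ξ+1) * (2*η-1) * (1 + 2*η - 2*ξ + 12*ξ*η))
    (hBp0 : ∀ ξ η, Bp0 ξ η = -(1/4) * (2*ξ+1) * (6*ξ-1) * (4*η^2 - 1))
    (hBm0 : ∀ ξ η, Bm0 ξ η = -(1/4) * (2*ξ-1) * (6*ξ+1) * (4*η^2 - 1))
    (hB0p : ∀ ξ η, B0p ξ η = -(1/4) * (4*ξ^2 - 1) * (2*η+1) * (6*η-1))
    (hB0m : ∀ ξ η, B0m ξ η = -(1/4) * (4*ξ^2 - 1) * (2*η-1) * (6*η+1))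
    (hB00 : ∀ ξ η, B00 ξ η = 9/4 * (4*ξ^2 - 1) * (4*η^2 - 1)) :
    (∫ ξ in (-(1/2 : ℝ))..(1/2), ∫ η in (-(1/2 : ℝ))..(1/2), Ap0 ξ η * B00 ξ η) = 0 ∧
    (∫ ξ in (-(1/2 : ℝ))..(1/2), ∫ η in (-(1/2 : ℝ))..(1/2), Ap0 ξ η * Bm0 ξ η) = 0 ∧
    (∫ ξ in (-(1/2 : ℝ))..(1/2), ∫ η in (-(1/2 : ℝ))..(1/2), Ap0 ξ η * B0p ξ η) = 0 ∧
    (∫ ξ in (-(1/2 : ℝ))..(1/2), ∫ η in (-(1/2 : ℝ))..(1/2), Ap0 ξ η * B0m ξ η) = 0 ∧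
    (∫ ξ in (-(1/2 : ℝ))..(1/2), ∫ η in (-(1/2 : ℝ))..(1/2), Ap0 ξ η * Bmp ξ η) = 0 ∧
    (∫ ξ in (-(1/2 : ℝ))..(1/2), ∫ η in (-(1/2 : ℝ))..(1/2), Ap0 ξ η * Bmm ξ η) = 0 ∧
    (∫ ξ in (-(1/2 : ℝ))..(1/2), ∫ η in (-(1/2 : ℝ))..(1/2), Ap0 ξ η * Bpp ξ η) = α₁ ∧
    (∫ ξ in (-(1/2 : ℝ))..(1/2), ∫ η in (-(1/2 : ℝ))..(1/2), Ap0 ξ η * Bpm ξ η) = α₂ ∧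
    (∫ ξ in (-(1/2 : ℝ))..(1/2), ∫ η in (-(1/2 : ℝ))..(1/2), Ap0 ξ η * Bp0 ξ η) = (1 + α₃)/2 := by
  refine ⟨?_, ?_, ?_, ?_, ?_, ?_, ?_, ?_, ?_⟩
  · rw [show (∫ ξ in (-(1/2 : ℝ))..(1/2), ∫ η in (-(1/2 : ℝ))..(1/2), Ap0 ξ η * B00 ξ η)
        = ∫ ξ in (-(1/2 : ℝ))..(1/2), (((-27/16:ℝ) + (-27/16:ℝ)*α₃) + ((27/4:ℝ) + (27/4:ℝ)*α₃)*ξ + ((81/2:ℝ) + (81/2:ℝ)*α₃)*ξ^2 + ((-27:ℝ) + (-27:ℝ)*α₃)*ξ^3 + ((-135:ℝ) + (-135:ℝ)*α₃)*ξ^4) from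
      intervalIntegral.integral_congr (fun ξ _ => by
        rw [show (∫ η in (-(1/2 : ℝ))..(1/2), Ap0 ξ η * B00 ξ η)
            = ∫ η in (-(1/2 : ℝ))..(1/2), (((-243/64:ℝ) + (-243/64:ℝ)*α₃ + (81/16:ℝ)*α₂ + (81/16:ℝ)*α₁ + (243/16:ℝ)*ξ + (243/16:ℝ)*ξ*α₃ + (-81/4:ℝ)*ξ*α₂ + (-81/4:ℝ)*ξ*α₁ + (729/8:ℝ)*ξ^2 + (729/8:ℝ)*ξ^2*α₃ + (-243/2:ℝ)*ξ^2*α₂ + (-243/2:ℝ)*ξ^2*α₁ + (-243/4:ℝ)*ξ^3 + (-243/4:ℝ)*ξ^3*α₃ + (81:ℝ)*ξ^3*α₂ + (81:ℝ)*ξ^3*α₁ + (-1215/4:ℝ)*ξ^4 + (-1215/4:ℝ)*ξ^4*α₃ + (405:ℝ)*ξ^4*α₂ + (405:ℝ)*ξ^4*α₁) + ((81/4:ℝ)*α₂ + (-81/4:ℝ)*α₁ + (-81:ℝ)*ξ*α₂ + (81:ℝ)*ξ*α₁ + (-486:ℝ)*ξ^2*α₂ + (486:ℝ)*ξ^2*α₁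 + (324:ℝ)*ξ^3*α₂ + (-324:ℝ)*ξ^3*α₁ + (1620:ℝ)*ξ^4*α₂ + (-1620:ℝ)*ξ^4*α₁)*η + ((81/2:ℝ) + (81/2:ℝ)*α₃ + (-243/2:ℝ)*α₂ + (-243/2:ℝ)*α₁ + (-162:ℝ)*ξ + (-162:ℝ)*ξ*α₃ + (486:ℝ)*ξ*α₂ + (486:ℝ)*ξ*α₁ + (-972:ℝ)*ξ^2 + (-972:ℝ)*ξ^2*α₃ + (2916:ℝ)*ξ^2*α₂ + (2916:ℝ)*ξ^2*α₁ + (648:ℝ)*ξ^3 + (648:ℝ)*ξ^3*α₃ + (-1944:ℝ)*ξ^3*α₂ + (-1944:ℝ)*ξ^3*α₁ + (3240:ℝ)*ξ^4 + (3240:ℝ)*ξ^4*α₃ + (-9720:ℝ)*ξ^4*α₂ + (-9720:ℝ)*ξ^4*α₁)*η^2 + ((-81:ℝ)*α₂ + (81:ℝ)*α₁ + (324:ℝ)*ξ*α₂ + (-324:ℝ)*ξ*α₁ + (1944:ℝ)*ξ^2*α₂ + (-1944:ℝ)*ξ^2*α₁ + (-1296:ℝ)*ξ^3*α₂ + (1296:ℝ)*ξ^3*α₁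 + (-6480:ℝ)*ξ^4*α₂ + (6480:ℝ)*ξ^4*α₁)*η^3 + ((-405/4:ℝ) + (-405/4:ℝ)*α₃ + (405:ℝ)*α₂ + (405:ℝ)*α₁ + (405:ℝ)*ξ + (405:ℝ)*ξ*α₃ + (-1620:ℝ)*ξ*α₂ + (-1620:ℝ)*ξ*α₁ + (2430:ℝ)*ξ^2 + (2430:ℝ)*ξ^2*α₃ + (-9720:ℝ)*ξ^2*α₂ + (-9720:ℝ)*ξ^2*α₁ + (-1620:ℝ)*ξ^3 + (-1620:ℝ)*ξ^3*α₃ + (6480:ℝ)*ξ^3*α₂ + (6480:ℝ)*ξ^3*α₁ + (-8100:ℝ)*ξ^4 + (-8100:ℝ)*ξ^4*α₃ + (32400:ℝ)*ξ^4*α₂ + (32400:ℝ)*ξ^4*α₁)*η^4) from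
          intervalIntegral.integral_congr (fun η _ => by
            simp only [hAp0, hAp, hAm, hA0, hB00]; ring), int4]
        ring), int4]
    ring
  · rw [show (∫ ξ in (-(1/2 : ℝ))..(1/2), ∫ η in (-(1/2 : ℝ))..(1/2), Ap0 ξ η * Bm0 ξ η)
        = ∫ ξ in (-(1/2 : ℝ))..(1/2), (((3/16:ℝ) + (3/16:ℝ)*α₃) + (0)*ξ + ((-9:ℝ) + (-9:ℝ)*α₃)*ξ^2 + ((-6:ℝ) + (-6:ℝ)*α₃)*ξ^3 + ((45:ℝ) + (45:ℝ)*α₃)*ξ^4) from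
      intervalIntegral.integral_congr (fun ξ _ => by
        rw [show (∫ η in (-(1/2 : ℝ))..(1/2), Ap0 ξ η * Bm0 ξ η)
            = ∫ η in (-(1/2 : ℝ))..(1/2), (((27/64:ℝ) + (27/64:ℝ)*α₃ + (-9/16:ℝ)*α₂ + (-9/16:ℝ)*α₁ + (-81/4:ℝ)*ξ^2 + (-81/4:ℝ)*ξ^2*α₃ + (27:ℝ)*ξ^2*α₂ + (27:ℝ)*ξ^2*α₁ + (-27/2:ℝ)*ξ^3 + (-27/2:ℝ)*ξ^3*α₃ + (18:ℝ)*ξ^3*α₂ + (18:ℝ)*ξ^3*α₁ + (405/4:ℝ)*ξ^4 + (405/4:ℝ)*ξ^4*α₃ + (-135:ℝ)*ξ^4*α₂ + (-135:ℝ)*ξ^4*α₁) + ((-9/4:ℝ)*α₂ + (9/4:ℝ)*α₁ + (108:ℝ)*ξ^2*α₂ + (-108:ℝ)*ξ^2*α₁ + (72:ℝ)*ξ^3*α₂ + (-72:ℝ)*ξ^3*α₁ + (-540:ℝ)*ξ^4*α₂ + (540:ℝ)*ξ^4*α₁)*η + ((-9/2:ℝ) + (-9/2:ℝ)*α₃ +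 (27/2:ℝ)*α₂ + (27/2:ℝ)*α₁ + (216:ℝ)*ξ^2 + (216:ℝ)*ξ^2*α₃ + (-648:ℝ)*ξ^2*α₂ + (-648:ℝ)*ξ^2*α₁ + (144:ℝ)*ξ^3 + (144:ℝ)*ξ^3*α₃ + (-432:ℝ)*ξ^3*α₂ + (-432:ℝ)*ξ^3*α₁ + (-1080:ℝ)*ξ^4 + (-1080:ℝ)*ξ^4*α₃ + (3240:ℝ)*ξ^4*α₂ + (3240:ℝ)*ξ^4*α₁)*η^2 + ((9:ℝ)*α₂ + (-9:ℝ)*α₁ + (-432:ℝ)*ξ^2*α₂ + (432:ℝ)*ξ^2*α₁ + (-288:ℝ)*ξ^3*α₂ + (288:ℝ)*ξ^3*α₁ + (2160:ℝ)*ξ^4*α₂ + (-2160:ℝ)*ξ^4*α₁)*η^3 + ((45/4:ℝ) + (45/4:ℝ)*α₃ + (-45:ℝ)*α₂ + (-45:ℝ)*α₁ + (-540:ℝ)*ξ^2 + (-540:ℝ)*ξ^2*α₃ + (2160:ℝ)*ξ^2*α₂ + (2160:ℝ)*ξ^2*α₁ + (-360:ℝ)*ξ^3 + (-360:ℝ)*ξ^3*α₃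 + (1440:ℝ)*ξ^3*α₂ + (1440:ℝ)*ξ^3*α₁ + (2700:ℝ)*ξ^4 + (2700:ℝ)*ξ^4*α₃ + (-10800:ℝ)*ξ^4*α₂ + (-10800:ℝ)*ξ^4*α₁)*η^4) from
          intervalIntegral.integral_congr (fun η _ => by
            simp only [hAp0, hAp, hAm, hA0, hBm0]; ring), int4]
        ring), int4]
    ring
  · rw [show (∫ ξ in (-(1/2 : ℝ))..(1/2), ∫ η in (-(1/2 : ℝ))..(1/2), Ap0 ξ η * B0p ξ η)
        = ∫ ξ in (-(1/2 : ℝ))..(1/2), (((3/16:ℝ) + (3/16:ℝ)*α₃ + (-3/2:ℝ)*α₁) + ((-3/4:ℝ) + (-3/4:ℝ)*α₃ + (6:ℝ)*α₁)*ξ + ((-9/2:ℝ) + (-9/2:ℝ)*α₃ + (36:ℝ)*α₁)*ξ^2 + ((3:ℝ) + (3:ℝ)*α₃ + (-24:ℝ)*α₁)*ξ^3 + ((15:ℝ) + (15:ℝ)*α₃ + (-120:ℝ)*α₁)*ξ^4) from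
      intervalIntegral.integral_congr (fun ξ _ => by
        rw [show (∫ η in (-(1/2 : ℝ))..(1/2), Ap0 ξ η * B0p ξ η)
            = ∫ η in (-(1/2 : ℝ))..(1/2), (((27/64:ℝ) + (27/64:ℝ)*α₃ + (-9/16:ℝ)*α₂ + (-9/16:ℝ)*α₁ + (-27/16:ℝ)*ξ + (-27/16:ℝ)*ξ*α₃ + (9/4:ℝ)*ξ*α₂ + (9/4:ℝ)*ξ*α₁ + (-81/8:ℝ)*ξ^2 + (-81/8:ℝ)*ξ^2*α₃ + (27/2:ℝ)*ξ^2*α₂ + (27/2:ℝ)*ξ^2*α₁ + (27/4:ℝ)*ξ^3 + (27/4:ℝ)*ξ^3*α₃ + (-9:ℝ)*ξ^3*α₂ + (-9:ℝ)*ξ^3*α₁ + (135/4:ℝ)*ξ^4 + (135/4:ℝ)*ξ^4*α₃ + (-45:ℝ)*ξ^4*α₂ + (-45:ℝ)*ξ^4*α₁) + ((-27/16:ℝ) + (-27/16:ℝ)*α₃ + (9/2:ℝ)*α₁ + (27/4:ℝ)*ξ + (27/4:ℝ)*ξ*α₃ + (-18:ℝ)*ξ*α₁ + (81/2:ℝ)*ξ^2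 + (81/2:ℝ)*ξ^2*α₃ + (-108:ℝ)*ξ^2*α₁ + (-27:ℝ)*ξ^3 + (-27:ℝ)*ξ^3*α₃ + (72:ℝ)*ξ^3*α₁ + (-135:ℝ)*ξ^4 + (-135:ℝ)*ξ^4*α₃ + (360:ℝ)*ξ^4*α₁)*η + ((-63/8:ℝ) + (-63/8:ℝ)*α₃ + (27:ℝ)*α₂ + (9:ℝ)*α₁ + (63/2:ℝ)*ξ + (63/2:ℝ)*ξ*α₃ + (-108:ℝ)*ξ*α₂ + (-36:ℝ)*ξ*α₁ + (189:ℝ)*ξ^2 + (189:ℝ)*ξ^2*α₃ + (-648:ℝ)*ξ^2*α₂ + (-216:ℝ)*ξ^2*α₁ + (-126:ℝ)*ξ^3 + (-126:ℝ)*ξ^3*α₃ + (432:ℝ)*ξ^3*α₂ + (144:ℝ)*ξ^3*α₁ + (-630:ℝ)*ξ^4 + (-630:ℝ)*ξ^4*α₃ + (2160:ℝ)*ξ^4*α₂ + (720:ℝ)*ξ^4*α₁)*η^2 + ((45/4:ℝ) + (45/4:ℝ)*α₃ + (-18:ℝ)*α₂ + (-72:ℝ)*α₁ + (-45:ℝ)*ξ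 + (-45:ℝ)*ξ*α₃ + (72:ℝ)*ξ*α₂ + (288:ℝ)*ξ*α₁ + (-270:ℝ)*ξ^2 + (-270:ℝ)*ξ^2*α₃ + (432:ℝ)*ξ^2*α₂ + (1728:ℝ)*ξ^2*α₁ + (180:ℝ)*ξ^3 + (180:ℝ)*ξ^3*α₃ + (-288:ℝ)*ξ^3*α₂ + (-1152:ℝ)*ξ^3*α₁ + (900:ℝ)*ξ^4 + (900:ℝ)*ξ^4*α₃ + (-1440:ℝ)*ξ^4*α₂ + (-5760:ℝ)*ξ^4*α₁)*η^3 + ((135/4:ℝ) + (135/4:ℝ)*α₃ + (-135:ℝ)*α₂ + (-135:ℝ)*α₁ + (-135:ℝ)*ξ + (-135:ℝ)*ξ*α₃ + (540:ℝ)*ξ*α₂ + (540:ℝ)*ξ*α₁ + (-810:ℝ)*ξ^2 + (-810:ℝ)*ξ^2*α₃ + (3240:ℝ)*ξ^2*α₂ + (3240:ℝ)*ξ^2*α₁ + (540:ℝ)*ξ^3 + (540:ℝ)*ξ^3*α₃ + (-2160:ℝ)*ξ^3*α₂ + (-2160:ℝ)*ξ^3*α₁ + (2700:ℝ)*ξ^4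 + (2700:ℝ)*ξ^4*α₃ + (-10800:ℝ)*ξ^4*α₂ + (-10800:ℝ)*ξ^4*α₁)*η^4) from
          intervalIntegral.integral_congr (fun η _ => by
            simp only [hAp0, hAp, hAm, hA0, hB0p]; ring), int4]
        ring), int4]
    ring
  · rw [show (∫ ξ in (-(1/2 : ℝ))..(1/2), ∫ η in (-(1/2 : ℝ))..(1/2), Ap0 ξ η * B0m ξ η)
        = ∫ ξ in (-(1/2 : ℝ))..(1/2), (((3/16:ℝ) + (3/16:ℝ)*α₃ + (-3/2:ℝ)*α₂) + ((-3/4:ℝ) + (-3/4:ℝ)*α₃ + (6:ℝ)*α₂)*ξ + ((-9/2:ℝ) + (-9/2:ℝ)*α₃ + (36:ℝ)*α₂)*ξ^2 + ((3:ℝ) + (3:ℝ)*α₃ + (-24:ℝ)*α₂)*ξ^3 + ((15:ℝ) + (15:ℝ)*α₃ + (-120:ℝ)*α₂)*ξ^4) from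
      intervalIntegral.integral_congr (fun ξ _ => by
        rw [show (∫ η in (-(1/2 : ℝ))..(1/2), Ap0 ξ η * B0m ξ η)
            = ∫ η in (-(1/2 : ℝ))..(1/2), (((27/64:ℝ) + (27/64:ℝ)*α₃ + (-9/16:ℝ)*α₂ + (-9/16:ℝ)*α₁ + (-27/16:ℝ)*ξ + (-27/16:ℝ)*ξ*α₃ + (9/4:ℝ)*ξ*α₂ + (9/4:ℝ)*ξ*α₁ + (-81/8:ℝ)*ξ^2 + (-81/8:ℝ)*ξ^2*α₃ + (27/2:ℝ)*ξ^2*α₂ + (27/2:ℝ)*ξ^2*α₁ + (27/4:ℝ)*ξ^3 + (27/4:ℝ)*ξ^3*α₃ + (-9:ℝ)*ξ^3*α₂ + (-9:ℝ)*ξ^3*α₁ + (135/4:ℝ)*ξ^4 + (135/4:ℝ)*ξ^4*α₃ + (-45:ℝ)*ξ^4*α₂ + (-45:ℝ)*ξ^4*α₁) + ((27/16:ℝ) + (27/16:ℝ)*α₃ + (-9/2:ℝ)*α₂ + (-27/4:ℝ)*ξ + (-27/4:ℝ)*ξ*α₃ + (18:ℝ)*ξ*α₂ + (-81/2:ℝ)*ξ^2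 + (-81/2:ℝ)*ξ^2*α₃ + (108:ℝ)*ξ^2*α₂ + (27:ℝ)*ξ^3 + (27:ℝ)*ξ^3*α₃ + (-72:ℝ)*ξ^3*α₂ + (135:ℝ)*ξ^4 + (135:ℝ)*ξ^4*α₃ + (-360:ℝ)*ξ^4*α₂)*η + ((-63/8:ℝ) + (-63/8:ℝ)*α₃ + (9:ℝ)*α₂ + (27:ℝ)*α₁ + (63/2:ℝ)*ξ + (63/2:ℝ)*ξ*α₃ + (-36:ℝ)*ξ*α₂ + (-108:ℝ)*ξ*α₁ + (189:ℝ)*ξ^2 + (189:ℝ)*ξ^2*α₃ + (-216:ℝ)*ξ^2*α₂ + (-648:ℝ)*ξ^2*α₁ + (-126:ℝ)*ξ^3 + (-126:ℝ)*ξ^3*α₃ + (144:ℝ)*ξ^3*α₂ + (432:ℝ)*ξ^3*α₁ + (-630:ℝ)*ξ^4 + (-630:ℝ)*ξ^4*α₃ + (720:ℝ)*ξ^4*α₂ + (2160:ℝ)*ξ^4*α₁)*η^2 + ((-45/4:ℝ) + (-45/4:ℝ)*α₃ + (72:ℝ)*α₂ + (18:ℝ)*α₁ + (45:ℝ)*ξ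 + (45:ℝ)*ξ*α₃ + (-288:ℝ)*ξ*α₂ + (-72:ℝ)*ξ*α₁ + (270:ℝ)*ξ^2 + (270:ℝ)*ξ^2*α₃ + (-1728:ℝ)*ξ^2*α₂ + (-432:ℝ)*ξ^2*α₁ + (-180:ℝ)*ξ^3 + (-180:ℝ)*ξ^3*α₃ + (1152:ℝ)*ξ^3*α₂ + (288:ℝ)*ξ^3*α₁ + (-900:ℝ)*ξ^4 + (-900:ℝ)*ξ^4*α₃ + (5760:ℝ)*ξ^4*α₂ + (1440:ℝ)*ξ^4*α₁)*η^3 + ((135/4:ℝ) + (135/4:ℝ)*α₃ + (-135:ℝ)*α₂ + (-135:ℝ)*α₁ + (-135:ℝ)*ξ + (-135:ℝ)*ξ*α₃ + (540:ℝ)*ξ*α₂ + (540:ℝ)*ξ*α₁ + (-810:ℝ)*ξ^2 + (-810:ℝ)*ξ^2*α₃ + (3240:ℝ)*ξ^2*α₂ + (3240:ℝ)*ξ^2*α₁ + (540:ℝ)*ξ^3 + (540:ℝ)*ξ^3*α₃ + (-2160:ℝ)*ξ^3*α₂ + (-2160:ℝ)*ξ^3*α₁ + (2700:ℝ)*ξ^4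 + (2700:ℝ)*ξ^4*α₃ + (-10800:ℝ)*ξ^4*α₂ + (-10800:ℝ)*ξ^4*α₁)*η^4) from
          intervalIntegral.integral_congr (fun η _ => by
            simp only [hAp0, hAp, hAm, hA0, hB0m]; ring), int4]
        ring), int4]
    ring
  · rw [show (∫ ξ in (-(1/2 : ℝ))..(1/2), ∫ η in (-(1/2 : ℝ))..(1/2), Ap0 ξ η * Bmp ξ η)
        = ∫ ξ in (-(1/2 : ℝ))..(1/2), (((3/64:ℝ) + (3/64:ℝ)*α₃) + ((-3/16:ℝ) + (-3/16:ℝ)*α₃ + (3/2:ℝ)*α₁)*ξ + ((-9/8:ℝ) + (-9/8:ℝ)*α₃ + (-9:ℝ)*α₁)*ξ^2 + ((3/4:ℝ) + (3/4:ℝ)*α₃ + (-18:ℝ)*α₁)*ξ^3 + ((15/4:ℝ) + (15/4:ℝ)*α₃ + (60:ℝ)*α₁)*ξ^4) from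
      intervalIntegral.integral_congr (fun ξ _ => by
        rw [show (∫ η in (-(1/2 : ℝ))..(1/2), Ap0 ξ η * Bmp ξ η)
            = ∫ η in (-(1/2 : ℝ))..(1/2), (((27/256:ℝ) + (27/256:ℝ)*α₃ + (-9/64:ℝ)*α₂ + (-9/64:ℝ)*α₁ + (-27/64:ℝ)*ξ + (-27/64:ℝ)*ξ*α₃ + (9/16:ℝ)*ξ*α₂ + (9/16:ℝ)*ξ*α₁ + (-81/32:ℝ)*ξ^2 + (-81/32:ℝ)*ξ^2*α₃ + (27/8:ℝ)*ξ^2*α₂ + (27/8:ℝ)*ξ^2*α₁ + (27/16:ℝ)*ξ^3 + (27/16:ℝ)*ξ^3*α₃ + (-9/4:ℝ)*ξ^3*α₂ + (-9/4:ℝ)*ξ^3*α₁ + (135/16:ℝ)*ξ^4 + (135/16:ℝ)*ξ^4*α₃ + (-45/4:ℝ)*ξ^4*α₂ + (-45/4:ℝ)*ξ^4*α₁) + ((-9/16:ℝ)*α₂ + (9/16:ℝ)*α₁ + (27/16:ℝ)*ξ + (27/16:ℝ)*ξ*α₃ + (-9/2:ℝ)*ξ*α₁ + (-81/8:ℝ)*ξ^2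 + (-81/8:ℝ)*ξ^2*α₃ + (27:ℝ)*ξ^2*α₂ + (-81/4:ℝ)*ξ^3 + (-81/4:ℝ)*ξ^3*α₃ + (18:ℝ)*ξ^3*α₂ + (36:ℝ)*ξ^3*α₁ + (135/2:ℝ)*ξ^4 + (135/2:ℝ)*ξ^4*α₃ + (-135:ℝ)*ξ^4*α₂ + (-45:ℝ)*ξ^4*α₁)*η + ((-9/8:ℝ) + (-9/8:ℝ)*α₃ + (27/8:ℝ)*α₂ + (27/8:ℝ)*α₁ + (63/8:ℝ)*ξ + (63/8:ℝ)*ξ*α₃ + (-27:ℝ)*ξ*α₂ + (-9:ℝ)*ξ*α₁ + (27/4:ℝ)*ξ^2 + (27/4:ℝ)*ξ^2*α₃ + (-108:ℝ)*ξ^2*α₁ + (-117/2:ℝ)*ξ^3 + (-117/2:ℝ)*ξ^3*α₃ + (216:ℝ)*ξ^3*α₂ + (45:ℝ)*ξ^4 + (45:ℝ)*ξ^4*α₃ + (-270:ℝ)*ξ^4*α₂ + (450:ℝ)*ξ^4*α₁)*η^2 + ((9/4:ℝ)*α₂ + (-9/4:ℝ)*α₁ + (-45/4:ℝ)*ξ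 + (-45/4:ℝ)*ξ*α₃ + (18:ℝ)*ξ*α₂ + (72:ℝ)*ξ*α₁ + (135/2:ℝ)*ξ^2 + (135/2:ℝ)*ξ^2*α₃ + (-216:ℝ)*ξ^2*α₂ + (-324:ℝ)*ξ^2*α₁ + (135:ℝ)*ξ^3 + (135:ℝ)*ξ^3*α₃ + (-288:ℝ)*ξ^3*α₂ + (-792:ℝ)*ξ^3*α₁ + (-450:ℝ)*ξ^4 + (-450:ℝ)*ξ^4*α₃ + (1260:ℝ)*ξ^4*α₂ + (2340:ℝ)*ξ^4*α₁)*η^3 + ((45/16:ℝ) + (45/16:ℝ)*α₃ + (-45/4:ℝ)*α₂ + (-45/4:ℝ)*α₁ + (-135/4:ℝ)*ξ + (-135/4:ℝ)*ξ*α₃ + (135:ℝ)*ξ*α₂ + (135:ℝ)*ξ*α₁ + (135/2:ℝ)*ξ^2 + (135/2:ℝ)*ξ^2*α₃ + (-270:ℝ)*ξ^2*α₂ + (-270:ℝ)*ξ^2*α₁ + (315:ℝ)*ξ^3 + (315:ℝ)*ξ^3*α₃ + (-1260:ℝ)*ξ^3*α₂ + (-1260:ℝ)*ξ^3*α₁ +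 (-675:ℝ)*ξ^4 + (-675:ℝ)*ξ^4*α₃ + (2700:ℝ)*ξ^4*α₂ + (2700:ℝ)*ξ^4*α₁)*η^4) from
          intervalIntegral.integral_congr (fun η _ => by
            simp only [hAp0, hAp, hAm, hA0, hBmp]; ring), int4]
        ring), int4]
    ring
  · rw [show (∫ ξ in (-(1/2 : ℝ))..(1/2), ∫ η in (-(1/2 : ℝ))..(1/2), Ap0 ξ η * Bmm ξ η)
        = ∫ ξ in (-(1/2 : ℝ))..(1/2), (((3/64:ℝ) + (3/64:ℝ)*α₃) + ((-3/16:ℝ) + (-3/16:ℝ)*α₃ + (3/2:ℝ)*α₂)*ξ + ((-9/8:ℝ) + (-9/8:ℝ)*α₃ + (-9:ℝ)*α₂)*ξ^2 + ((3/4:ℝ) + (3/4:ℝ)*α₃ + (-18:ℝ)*α₂)*ξ^3 + ((15/4:ℝ) + (15/4:ℝ)*α₃ + (60:ℝ)*α₂)*ξ^4) from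
      intervalIntegral.integral_congr (fun ξ _ => by
        rw [show (∫ η in (-(1/2 : ℝ))..(1/2), Ap0 ξ η * Bmm ξ η)
            = ∫ η in (-(1/2 : ℝ))..(1/2), (((27/256:ℝ) + (27/256:ℝ)*α₃ + (-9/64:ℝ)*α₂ + (-9/64:ℝ)*α₁ + (-27/64:ℝ)*ξ + (-27/64:ℝ)*ξ*α₃ + (9/16:ℝ)*ξ*α₂ + (9/16:ℝ)*ξ*α₁ + (-81/32:ℝ)*ξ^2 + (-81/32:ℝ)*ξ^2*α₃ + (27/8:ℝ)*ξ^2*α₂ + (27/8:ℝ)*ξ^2*α₁ + (27/16:ℝ)*ξ^3 + (27/16:ℝ)*ξ^3*α₃ + (-9/4:ℝ)*ξ^3*α₂ + (-9/4:ℝ)*ξ^3*α₁ + (135/16:ℝ)*ξ^4 + (135/16:ℝ)*ξ^4*α₃ + (-45/4:ℝ)*ξ^4*α₂ + (-45/4:ℝ)*ξ^4*α₁) + ((-9/16:ℝ)*α₂ + (9/16:ℝ)*α₁ + (-27/16:ℝ)*ξ + (-27/16:ℝ)*ξ*α₃ + (9/2:ℝ)*ξ*α₂ + (81/8:ℝ)*ξ^2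 + (81/8:ℝ)*ξ^2*α₃ + (-27:ℝ)*ξ^2*α₁ + (81/4:ℝ)*ξ^3 + (81/4:ℝ)*ξ^3*α₃ + (-36:ℝ)*ξ^3*α₂ + (-18:ℝ)*ξ^3*α₁ + (-135/2:ℝ)*ξ^4 + (-135/2:ℝ)*ξ^4*α₃ + (45:ℝ)*ξ^4*α₂ + (135:ℝ)*ξ^4*α₁)*η + ((-9/8:ℝ) + (-9/8:ℝ)*α₃ + (27/8:ℝ)*α₂ + (27/8:ℝ)*α₁ + (63/8:ℝ)*ξ + (63/8:ℝ)*ξ*α₃ + (-9:ℝ)*ξ*α₂ + (-27:ℝ)*ξ*α₁ + (27/4:ℝ)*ξ^2 + (27/4:ℝ)*ξ^2*α₃ + (-108:ℝ)*ξ^2*α₂ + (-117/2:ℝ)*ξ^3 + (-117/2:ℝ)*ξ^3*α₃ + (216:ℝ)*ξ^3*α₁ + (45:ℝ)*ξ^4 + (45:ℝ)*ξ^4*α₃ + (450:ℝ)*ξ^4*α₂ + (-270:ℝ)*ξ^4*α₁)*η^2 + ((9/4:ℝ)*α₂ + (-9/4:ℝ)*α₁ + (45/4:ℝ)*ξ +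 (45/4:ℝ)*ξ*α₃ + (-72:ℝ)*ξ*α₂ + (-18:ℝ)*ξ*α₁ + (-135/2:ℝ)*ξ^2 + (-135/2:ℝ)*ξ^2*α₃ + (324:ℝ)*ξ^2*α₂ + (216:ℝ)*ξ^2*α₁ + (-135:ℝ)*ξ^3 + (-135:ℝ)*ξ^3*α₃ + (792:ℝ)*ξ^3*α₂ + (288:ℝ)*ξ^3*α₁ + (450:ℝ)*ξ^4 + (450:ℝ)*ξ^4*α₃ + (-2340:ℝ)*ξ^4*α₂ + (-1260:ℝ)*ξ^4*α₁)*η^3 + ((45/16:ℝ) + (45/16:ℝ)*α₃ + (-45/4:ℝ)*α₂ + (-45/4:ℝ)*α₁ + (-135/4:ℝ)*ξ + (-135/4:ℝ)*ξ*α₃ + (135:ℝ)*ξ*α₂ + (135:ℝ)*ξ*α₁ + (135/2:ℝ)*ξ^2 + (135/2:ℝ)*ξ^2*α₃ + (-270:ℝ)*ξ^2*α₂ + (-270:ℝ)*ξ^2*α₁ + (315:ℝ)*ξ^3 + (315:ℝ)*ξ^3*α₃ + (-1260:ℝ)*ξ^3*α₂ + (-1260:ℝ)*ξ^3*α₁ +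 (-675:ℝ)*ξ^4 + (-675:ℝ)*ξ^4*α₃ + (2700:ℝ)*ξ^4*α₂ + (2700:ℝ)*ξ^4*α₁)*η^4) from
          intervalIntegral.integral_congr (fun η _ => by
            simp only [hAp0, hAp, hAm, hA0, hBmm]; ring), int4]
        ring), int4]
    ring
  · rw [show (∫ ξ in (-(1/2 : ℝ))..(1/2), ∫ η in (-(1/2 : ℝ))..(1/2), Ap0 ξ η * Bpp ξ η)
        = ∫ ξ in (-(1/2 : ℝ))..(1/2), (((3/64:ℝ) + (3/64:ℝ)*α₃) + ((-3/16:ℝ) + (-3/16:ℝ)*α₃ + (-3/2:ℝ)*α₁)*ξ + ((-9/8:ℝ) + (-9/8:ℝ)*α₃ + (3:ℝ)*α₁)*ξ^2 + ((3/4:ℝ) + (3/4:ℝ)*α₃ + (42:ℝ)*α₁)*ξ^3 + ((15/4:ℝ) + (15/4:ℝ)*α₃ + (60:ℝ)*α₁)*ξ^4) from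
      intervalIntegral.integral_congr (fun ξ _ => by
        rw [show (∫ η in (-(1/2 : ℝ))..(1/2), Ap0 ξ η * Bpp ξ η)
            = ∫ η in (-(1/2 : ℝ))..(1/2), (((27/256:ℝ) + (27/256:ℝ)*α₃ + (-9/64:ℝ)*α₂ + (-9/64:ℝ)*α₁ + (-27/64:ℝ)*ξ + (-27/64:ℝ)*ξ*α₃ + (9/16:ℝ)*ξ*α₂ + (9/16:ℝ)*ξ*α₁ + (-81/32:ℝ)*ξ^2 + (-81/32:ℝ)*ξ^2*α₃ + (27/8:ℝ)*ξ^2*α₂ + (27/8:ℝ)*ξ^2*α₁ + (27/16:ℝ)*ξ^3 + (27/16:ℝ)*ξ^3*α₃ + (-9/4:ℝ)*ξ^3*α₂ + (-9/4:ℝ)*ξ^3*α₁ + (135/16:ℝ)*ξ^4 + (135/16:ℝ)*ξ^4*α₃ + (-45/4:ℝ)*ξ^4*α₂ + (-45/4:ℝ)*ξ^4*α₁) + ((-9/16:ℝ)*α₂ + (9/16:ℝ)*α₁ + (-27/16:ℝ)*ξ + (-27/16:ℝ)*ξ*α₃ + (9/2:ℝ)*ξ*α₂ + (27/8:ℝ)*ξ^2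 + (27/8:ℝ)*ξ^2*α₃ + (9:ℝ)*ξ^2*α₂ + (-18:ℝ)*ξ^2*α₁ + (189/4:ℝ)*ξ^3 + (189/4:ℝ)*ξ^3*α₃ + (-72:ℝ)*ξ^3*α₂ + (-54:ℝ)*ξ^3*α₁ + (135/2:ℝ)*ξ^4 + (135/2:ℝ)*ξ^4*α₃ + (-135:ℝ)*ξ^4*α₂ + (-45:ℝ)*ξ^4*α₁)*η + ((-9/8:ℝ) + (-9/8:ℝ)*α₃ + (27/8:ℝ)*α₂ + (27/8:ℝ)*α₁ + (9/8:ℝ)*ξ + (9/8:ℝ)*ξ*α₃ + (-18:ℝ)*ξ*α₁ + (135/4:ℝ)*ξ^2 + (135/4:ℝ)*ξ^2*α₃ + (-108:ℝ)*ξ^2*α₂ + (-72:ℝ)*ξ^2*α₁ + (153/2:ℝ)*ξ^3 + (153/2:ℝ)*ξ^3*α₃ + (-324:ℝ)*ξ^3*α₂ + (180:ℝ)*ξ^3*α₁ + (45:ℝ)*ξ^4 + (45:ℝ)*ξ^4*α₃ + (-270:ℝ)*ξ^4*α₂ + (450:ℝ)*ξ^4*α₁)*η^2 + ((9/4:ℝ)*α₂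 + (-9/4:ℝ)*α₁ + (45/4:ℝ)*ξ + (45/4:ℝ)*ξ*α₃ + (-36:ℝ)*ξ*α₂ + (-54:ℝ)*ξ*α₁ + (-45/2:ℝ)*ξ^2 + (-45/2:ℝ)*ξ^2*α₃ + (180:ℝ)*ξ^2*α₁ + (-315:ℝ)*ξ^3 + (-315:ℝ)*ξ^3*α₃ + (792:ℝ)*ξ^3*α₂ + (1728:ℝ)*ξ^3*α₁ + (-450:ℝ)*ξ^4 + (-450:ℝ)*ξ^4*α₃ + (1260:ℝ)*ξ^4*α₂ + (2340:ℝ)*ξ^4*α₁)*η^3 + ((45/16:ℝ) + (45/16:ℝ)*α₃ + (-45/4:ℝ)*α₂ + (-45/4:ℝ)*α₁ + (45/4:ℝ)*ξ + (45/4:ℝ)*ξ*α₃ + (-45:ℝ)*ξ*α₂ + (-45:ℝ)*ξ*α₁ + (-225/2:ℝ)*ξ^2 + (-225/2:ℝ)*ξ^2*α₃ + (450:ℝ)*ξ^2*α₂ + (450:ℝ)*ξ^2*α₁ + (-585:ℝ)*ξ^3 + (-585:ℝ)*ξ^3*α₃ + (2340:ℝ)*ξ^3*α₂ + (2340:ℝ)*ξ^3*α₁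 + (-675:ℝ)*ξ^4 + (-675:ℝ)*ξ^4*α₃ + (2700:ℝ)*ξ^4*α₂ + (2700:ℝ)*ξ^4*α₁)*η^4) from
          intervalIntegral.integral_congr (fun η _ => by
            simp only [hAp0, hAp, hAm, hA0, hBpp]; ring), int4]
        ring), int4]
    ring
  · rw [show (∫ ξ in (-(1/2 : ℝ))..(1/2), ∫ η in (-(1/2 : ℝ))..(1/2), Ap0 ξ η * Bpm ξ η)
        = ∫ ξ in (-(1/2 : ℝ))..(1/2), (((3/64:ℝ) + (3/64:ℝ)*α₃) + ((-3/16:ℝ) + (-3/16:ℝ)*α₃ + (-3/2:ℝ)*α₂)*ξ + ((-9/8:ℝ) + (-9/8:ℝ)*α₃ + (3:ℝ)*α₂)*ξ^2 + ((3/4:ℝ) + (3/4:ℝ)*α₃ + (42:ℝ)*α₂)*ξ^3 + ((15/4:ℝ) + (15/4:ℝ)*α₃ + (60:ℝ)*α₂)*ξ^4) from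
      intervalIntegral.integral_congr (fun ξ _ => by
        rw [show (∫ η in (-(1/2 : ℝ))..(1/2), Ap0 ξ η * Bpm ξ η)
            = ∫ η in (-(1/2 : ℝ))..(1/2), (((27/256:ℝ) + (27/256:ℝ)*α₃ + (-9/64:ℝ)*α₂ + (-9/64:ℝ)*α₁ + (-27/64:ℝ)*ξ + (-27/64:ℝ)*ξ*α₃ + (9/16:ℝ)*ξ*α₂ + (9/16:ℝ)*ξ*α₁ + (-81/32:ℝ)*ξ^2 + (-81/32:ℝ)*ξ^2*α₃ + (27/8:ℝ)*ξ^2*α₂ + (27/8:ℝ)*ξ^2*α₁ + (27/16:ℝ)*ξ^3 + (27/16:ℝ)*ξ^3*α₃ + (-9/4:ℝ)*ξ^3*α₂ + (-9/4:ℝ)*ξ^3*α₁ + (135/16:ℝ)*ξ^4 + (135/16:ℝ)*ξ^4*α₃ + (-45/4:ℝ)*ξ^4*α₂ + (-45/4:ℝ)*ξ^4*α₁) + ((-9/16:ℝ)*α₂ + (9/16:ℝ)*α₁ + (27/16:ℝ)*ξ + (27/16:ℝ)*ξ*α₃ + (-9/2:ℝ)*ξ*α₁ + (-27/8:ℝ)*ξ^2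 + (-27/8:ℝ)*ξ^2*α₃ + (18:ℝ)*ξ^2*α₂ + (-9:ℝ)*ξ^2*α₁ + (-189/4:ℝ)*ξ^3 + (-189/4:ℝ)*ξ^3*α₃ + (54:ℝ)*ξ^3*α₂ + (72:ℝ)*ξ^3*α₁ + (-135/2:ℝ)*ξ^4 + (-135/2:ℝ)*ξ^4*α₃ + (45:ℝ)*ξ^4*α₂ + (135:ℝ)*ξ^4*α₁)*η + ((-9/8:ℝ) + (-9/8:ℝ)*α₃ + (27/8:ℝ)*α₂ + (27/8:ℝ)*α₁ + (9/8:ℝ)*ξ + (9/8:ℝ)*ξ*α₃ + (-18:ℝ)*ξ*α₂ + (135/4:ℝ)*ξ^2 + (135/4:ℝ)*ξ^2*α₃ + (-72:ℝ)*ξ^2*α₂ + (-108:ℝ)*ξ^2*α₁ + (153/2:ℝ)*ξ^3 + (153/2:ℝ)*ξ^3*α₃ + (180:ℝ)*ξ^3*α₂ + (-324:ℝ)*ξ^3*α₁ + (45:ℝ)*ξ^4 + (45:ℝ)*ξ^4*α₃ + (450:ℝ)*ξ^4*α₂ + (-270:ℝ)*ξ^4*α₁)*η^2 + ((9/4:ℝ)*α₂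 + (-9/4:ℝ)*α₁ + (-45/4:ℝ)*ξ + (-45/4:ℝ)*ξ*α₃ + (54:ℝ)*ξ*α₂ + (36:ℝ)*ξ*α₁ + (45/2:ℝ)*ξ^2 + (45/2:ℝ)*ξ^2*α₃ + (-180:ℝ)*ξ^2*α₂ + (315:ℝ)*ξ^3 + (315:ℝ)*ξ^3*α₃ + (-1728:ℝ)*ξ^3*α₂ + (-792:ℝ)*ξ^3*α₁ + (450:ℝ)*ξ^4 + (450:ℝ)*ξ^4*α₃ + (-2340:ℝ)*ξ^4*α₂ + (-1260:ℝ)*ξ^4*α₁)*η^3 + ((45/16:ℝ) + (45/16:ℝ)*α₃ + (-45/4:ℝ)*α₂ + (-45/4:ℝ)*α₁ + (45/4:ℝ)*ξ + (45/4:ℝ)*ξ*α₃ + (-45:ℝ)*ξ*α₂ + (-45:ℝ)*ξ*α₁ + (-225/2:ℝ)*ξ^2 + (-225/2:ℝ)*ξ^2*α₃ + (450:ℝ)*ξ^2*α₂ + (450:ℝ)*ξ^2*α₁ + (-585:ℝ)*ξ^3 + (-585:ℝ)*ξ^3*α₃ + (2340:ℝ)*ξ^3*α₂ + (2340:ℝ)*ξ^3*α₁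 + (-675:ℝ)*ξ^4 + (-675:ℝ)*ξ^4*α₃ + (2700:ℝ)*ξ^4*α₂ + (2700:ℝ)*ξ^4*α₁)*η^4) from
          intervalIntegral.integral_congr (fun η _ => by
            simp only [hAp0, hAp, hAm, hA0, hBpm]; ring), int4]
        ring), int4]
    ring
  · rw [show (∫ ξ in (-(1/2 : ℝ))..(1/2), ∫ η in (-(1/2 : ℝ))..(1/2), Ap0 ξ η * Bp0 ξ η)
        = ∫ ξ in (-(1/2 : ℝ))..(1/2), (((3/16:ℝ) + (3/16:ℝ)*α₃) + ((-3/2:ℝ) + (-3/2:ℝ)*α₃)*ξ + ((-3:ℝ) + (-3:ℝ)*α₃)*ξ^2 + ((24:ℝ) + (24:ℝ)*α₃)*ξ^3 + ((45:ℝ) + (45:ℝ)*α₃)*ξ^4) from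
      intervalIntegral.integral_congr (fun ξ _ => by
        rw [show (∫ η in (-(1/2 : ℝ))..(1/2), Ap0 ξ η * Bp0 ξ η)
            = ∫ η in (-(1/2 : ℝ))..(1/2), (((27/64:ℝ) + (27/64:ℝ)*α₃ + (-9/16:ℝ)*α₂ + (-9/16:ℝ)*α₁ + (-27/8:ℝ)*ξ + (-27/8:ℝ)*ξ*α₃ + (9/2:ℝ)*ξ*α₂ + (9/2:ℝ)*ξ*α₁ + (-27/4:ℝ)*ξ^2 + (-27/4:ℝ)*ξ^2*α₃ + (9:ℝ)*ξ^2*α₂ + (9:ℝ)*ξ^2*α₁ + (54:ℝ)*ξ^3 + (54:ℝ)*ξ^3*α₃ + (-72:ℝ)*ξ^3*α₂ + (-72:ℝ)*ξ^3*α₁ + (405/4:ℝ)*ξ^4 + (405/4:ℝ)*ξ^4*α₃ + (-135:ℝ)*ξ^4*α₂ + (-135:ℝ)*ξ^4*α₁) + ((-9/4:ℝ)*α₂ + (9/4:ℝ)*α₁ + (18:ℝ)*ξ*α₂ + (-18:ℝ)*ξ*α₁ + (36:ℝ)*ξ^2*α₂ + (-36:ℝ)*ξ^2*α₁ + (-288:ℝ)*ξ^3*α₂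 + (288:ℝ)*ξ^3*α₁ + (-540:ℝ)*ξ^4*α₂ + (540:ℝ)*ξ^4*α₁)*η + ((-9/2:ℝ) + (-9/2:ℝ)*α₃ + (27/2:ℝ)*α₂ + (27/2:ℝ)*α₁ + (36:ℝ)*ξ + (36:ℝ)*ξ*α₃ + (-108:ℝ)*ξ*α₂ + (-108:ℝ)*ξ*α₁ + (72:ℝ)*ξ^2 + (72:ℝ)*ξ^2*α₃ + (-216:ℝ)*ξ^2*α₂ + (-216:ℝ)*ξ^2*α₁ + (-576:ℝ)*ξ^3 + (-576:ℝ)*ξ^3*α₃ + (1728:ℝ)*ξ^3*α₂ + (1728:ℝ)*ξ^3*α₁ + (-1080:ℝ)*ξ^4 + (-1080:ℝ)*ξ^4*α₃ + (3240:ℝ)*ξ^4*α₂ + (3240:ℝ)*ξ^4*α₁)*η^2 + ((9:ℝ)*α₂ + (-9:ℝ)*α₁ + (-72:ℝ)*ξ*α₂ + (72:ℝ)*ξ*α₁ + (-144:ℝ)*ξ^2*α₂ + (144:ℝ)*ξ^2*α₁ + (1152:ℝ)*ξ^3*α₂ + (-1152:ℝ)*ξ^3*α₁ + (2160:ℝ)*ξ^4*α₂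 + (-2160:ℝ)*ξ^4*α₁)*η^3 + ((45/4:ℝ) + (45/4:ℝ)*α₃ + (-45:ℝ)*α₂ + (-45:ℝ)*α₁ + (-90:ℝ)*ξ + (-90:ℝ)*ξ*α₃ + (360:ℝ)*ξ*α₂ + (360:ℝ)*ξ*α₁ + (-180:ℝ)*ξ^2 + (-180:ℝ)*ξ^2*α₃ + (720:ℝ)*ξ^2*α₂ + (720:ℝ)*ξ^2*α₁ + (1440:ℝ)*ξ^3 + (1440:ℝ)*ξ^3*α₃ + (-5760:ℝ)*ξ^3*α₂ + (-5760:ℝ)*ξ^3*α₁ + (2700:ℝ)*ξ^4 + (2700:ℝ)*ξ^4*α₃ + (-10800:ℝ)*ξ^4*α₂ + (-10800:ℝ)*ξ^4*α₁)*η^4) from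
          intervalIntegral.integral_congr (fun η _ => by
            simp only [hAp0, hAp, hAm, hA0, hBp0]; ring), int4]
        ring), int4]
    ring
end
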